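/- Let ζ(t) ≥ 0 satisfy the differential inequality dζ/dt ≤ Cε(1 + ζ + εζ³) with ζ(0) = ζ₀ > 0. Then for any T₀ > 0 there exist ε₀ > 0 and a constant C(T₀, ζ₀) such that for all 0 < ε ≤ ε₀ and all 0 ≤ t ≤ T₀/ε, ζ(t) ≤ C(T₀, ζ₀). -/
import Mathlib


open Set

/-- Gronwall-type estimate for the differential inequality
`dζ/dt ≤ Cε(1 + ζ + εζ³)`: for any `T₀ > 0` there are `ε₀ > 0` and a constant
`K = C(T₀, ζ₀)` such that for all `0 < ε ≤ ε₀` every nonnegative solution with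
`ζ(0) = ζ₀ > 0` satisfies `ζ(t) ≤ K` for `0 ≤ t ≤ T₀/ε`. -/
theorem gronwall_error_bound
    (C T₀ ζ₀ : ℝ) (hC : 0 < C) (hT₀ : 0 < T₀) (hζ₀ : 0 < ζ₀) :
    ∃ ε₀ > (0 : ℝ), ∃ K : ℝ, ∀ ε : ℝ, 0 < ε → ε ≤ ε₀ →
      ∀ ζ : ℝ → ℝ, ζ 0 = ζ₀ →
        (∀ t ∈ Icc (0 : ℝ) (T₀ / ε), 0 ≤ ζ t) →
        (∀ t ∈ Icc (0 : ℝ) (T₀ / ε), ∃ d : ℝ,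
          HasDerivAt ζ d t ∧ d ≤ C * ε * (1 + ζ t + ε * (ζ t) ^ 3)) →
        ∀ t ∈ Icc (0 : ℝ) (T₀ / ε), ζ t ≤ K := by
  set M : ℝ := (ζ₀ + 2) * Real.exp (C * T₀) with hM
  have hexp1 : (1 : ℝ) ≤ Real.exp (C * T₀) := Real.one_le_exp (by positivity)
  have hMpos : 0 < M := by positivity
  set B : ℝ := M + 1 with hB
  have hBpos : 0 < B := by positivity
  refine ⟨B⁻¹ ^ 3, by positivity, B, ?_⟩
  intro ε hε hεε₀ ζ hζ0 hnn hderiv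
  set T : ℝ := T₀ / ε with hT
  have hTpos : 0 < T := div_pos hT₀ hε
  -- a measurable choice of derivative
  classical
  set f' : ℝ → ℝ := fun t => if h : t ∈ Icc (0 : ℝ) T then (hderiv t h).choose else 0
    with hf'def
  have hf'spec : ∀ t ∈ Icc (0 : ℝ) T,
      HasDerivAt ζ (f' t) t ∧ f' t ≤ C * ε * (1 + ζ t + ε * (ζ t) ^ 3) := by
    intro t ht
    simp only [hf'def, dif_pos ht]
    exact (hderiv t ht).choose_spec
  have hcont : ContinuousOn ζ (Icc (0 : ℝ) T) := fun t ht =>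
    ((hf'spec t ht).1.continuousAt).continuousWithinAt
  have hεB3 : ε * B ^ 3 ≤ 1 := by
    have : ε ≤ B⁻¹ ^ 3 := hεε₀
    calc ε * B ^ 3 ≤ B⁻¹ ^ 3 * B ^ 3 := by
          apply mul_le_mul_of_nonneg_right this (by positivity)
      _ = 1 := by field_simp
  -- Gronwall estimate on any initial segment where ζ stays ≤ B
  have key : ∀ t₁ ∈ Icc (0 : ℝ) T, (∀ s ∈ Ico (0 : ℝ) t₁, ζ s ≤ B) → ζ t₁ ≤ M := by
    intro t₁ ht₁ hbdd
    have hsub : Icc (0 : ℝ) t₁ ⊆ Icc 0 T := Icc_subset_Icc le_rfl ht₁.2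
    have hG := le_gronwallBound_of_liminf_deriv_right_le
      (f := ζ) (f' := f') (δ := ζ₀) (K := C * ε) (ε := 2 * (C * ε)) (a := 0) (b := t₁)
      (hcont.mono hsub)
      (fun x hx r hr => by
        have hx' : x ∈ Icc (0 : ℝ) T := hsub (Ico_subset_Icc_self hx)
        exact ((hf'spec x hx').1.hasDerivWithinAt (s := Ici x)).liminf_right_slope_le hr)
      (le_of_eq hζ0)
      (fun x hx => by
        have hx' : x ∈ Icc (0 : ℝ) T := hsub (Ico_subset_Icc_self hx)
        have h1 := (hf'spec x hx').2
        have h2 : ζ x ≤ B := hbdd x hx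
        have h3 : 0 ≤ ζ x := hnn x hx'
        have h4 : ε * (ζ x) ^ 3 ≤ 1 := by
          calc ε * (ζ x) ^ 3 ≤ ε * B ^ 3 := by
                apply mul_le_mul_of_nonneg_left (pow_le_pow_left₀ h3 h2 3) hε.le
            _ ≤ 1 := hεB3
        nlinarith [mul_pos hC hε])
      t₁ ⟨ht₁.1, le_rfl⟩
    have hKne : C * ε ≠ 0 := (mul_pos hC hε).ne'
    rw [gronwallBound_of_K_ne_0 hKne] at hG
    have hεt₁ : C * ε * (t₁ - 0) ≤ C * T₀ := by
      have h5 : ε * t₁ ≤ T₀ := by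
        rw [mul_comm]
        exact (le_div_iff₀ hε).mp ht₁.2
      have := mul_le_mul_of_nonneg_left h5 hC.le
      nlinarith
    have hexpt : Real.exp (C * ε * (t₁ - 0)) ≤ Real.exp (C * T₀) := Real.exp_le_exp.2 hεt₁
    have hdiv : 2 * (C * ε) / (C * ε) = 2 := by field_simp
    rw [hdiv] at hG
    have hexppos : 0 < Real.exp (C * ε * (t₁ - 0)) := Real.exp_pos _
    calc ζ t₁ ≤ ζ₀ * Real.exp (C * ε * (t₁ - 0)) + 2 * (Real.exp (C * ε * (t₁ - 0)) - 1) := hG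
      _ ≤ (ζ₀ + 2) * Real.exp (C * T₀) := by nlinarith
      _ = M := rfl
  -- Bootstrap: the set where ζ ≥ B must be empty
  by_contra hcon
  push_neg at hcon
  obtain ⟨t, ht, hζt⟩ := hcon
  set S : Set ℝ := {s | s ∈ Icc (0 : ℝ) T ∧ B ≤ ζ s} with hS
  have hSne : S.Nonempty := ⟨t, ht, hζt.le⟩
  have hSclosed : IsClosed S := by
    have : S = Icc (0 : ℝ) T ∩ {s ∈ Icc (0 : ℝ) T | ζ s ∈ Ici B} := by
      ext s; simp [hS, Set.mem_setOf_eq]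
    rw [this]
    exact isClosed_Icc.inter (hcont.preimage_isClosed_of_isClosed isClosed_Icc isClosed_Ici)
  have hSbdd : BddBelow S := ⟨0, fun s hs => hs.1.1⟩
  set t₁ : ℝ := sInf S with ht₁def
  have ht₁mem : t₁ ∈ S := hSclosed.csInf_mem hSne hSbdd
  have hlt : ∀ s ∈ Ico (0 : ℝ) t₁, ζ s ≤ B := by
    intro s hs
    by_contra hsB
    push_neg at hsB
    have hsS : s ∈ S := ⟨⟨hs.1, hs.2.le.trans ht₁mem.1.2⟩, hsB.le⟩
    exact absurd (csInf_le hSbdd hsS) (not_le.2 hs.2)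
  have := key t₁ ht₁mem.1 hlt
  have : B ≤ M := ht₁mem.2.trans this
  linarith
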